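/- Lebesgue density theorem on Cantor space: for every measurable set A ⊆ Ω, for μ-almost every x ∈ A, the cylinder densities of A at x converge to 1, i.e., lim_{n→∞} μ(A ∩ [x↾n]) / μ([x↾n]) = 1. -/

import Mathlib

open MeasureTheory ProbabilityTheory Filter Set Topology
open scoped ENNReal

namespace Stmt3

/-- The basic cylinder `[x↾n]` in Cantor space: all sequences agreeing with `x`
on the first `n` coordinates. -/
def cyl (x : ℕ → Bool) (n : ℕ) : Set (ℕ → Bool) := {y | ∀ i < n, y i = x i}

/-- `μ` is the fair-coin measure on Cantor space `ℕ → Bool` (the infinite product of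
uniform measures on `Bool`): it is a probability measure whose coordinates are
independent and each coordinate is a fair coin. -/
def IsFairCoin (μ : Measure (ℕ → Bool)) : Prop :=
  IsProbabilityMeasure μ ∧
    iIndepFun (fun n (y : ℕ → Bool) => y n) μ ∧
    ∀ (n : ℕ) (b : Bool), μ {y | y n = b} = 1 / 2

/-- Projection to the first `n` coordinates. -/
def proj (n : ℕ) (y : ℕ → Bool) : Fin n → Bool := fun i => y i

lemma measurable_proj (n : ℕ) : Measurable (proj n) :=
  measurable_pi_lambda _ fun i => measurable_pi_apply _

lemma preimage_singleton_proj (x : ℕ → Bool) (n : ℕ) :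
    proj n ⁻¹' {proj n x} = cyl x n := by
  ext y
  simp only [Set.mem_preimage, Set.mem_singleton_iff, cyl, Set.mem_setOf_eq, funext_iff, proj]
  constructor
  · intro h i hi; exact h ⟨i, hi⟩
  · intro h i; exact h i i.2

/-- Extension of `v : Fin n → Bool` by `false`. -/
def extend0 (n : ℕ) (v : Fin n → Bool) : ℕ → Bool :=
  fun i => if h : i < n then v ⟨i, h⟩ else false

lemma proj_extend0 (n : ℕ) (v : Fin n → Bool) : proj n (extend0 n v) = v := by
  funext i; simp [proj, extend0, i.2]

lemma preimage_singleton_eq_cyl (n : ℕ) (v : Fin n → Bool) :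
    proj n ⁻¹' {v} = cyl (extend0 n v) n := by
  rw [← preimage_singleton_proj (extend0 n v) n, proj_extend0]

/-- The canonical filtration: σ-algebra generated by the first `n` coordinates. -/
def Fcan (n : ℕ) : MeasurableSpace (ℕ → Bool) :=
  MeasurableSpace.comap (proj n) inferInstance

lemma Fcan_le (n : ℕ) : Fcan n ≤ (MeasurableSpace.pi : MeasurableSpace (ℕ → Bool)) :=
  (measurable_proj n).comap_le

lemma Fcan_mono : Monotone Fcan := by
  intro m n h
  have hg : Measurable (fun (v : Fin n → Bool) (i : Fin m) => v (Fin.castLE h i)) :=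
    measurable_pi_lambda _ fun i => measurable_pi_apply _
  have : proj m = (fun (v : Fin n → Bool) (i : Fin m) => v (Fin.castLE h i)) ∘ proj n := rfl
  rw [Fcan, this, ← MeasurableSpace.comap_comp]
  exact MeasurableSpace.comap_mono hg.comap_le

lemma measurable_Fcan_proj (n : ℕ) : Measurable[Fcan n] (proj n) :=
  Measurable.of_comap_le le_rfl

lemma measurableSet_cyl (x : ℕ → Bool) (n : ℕ) : MeasurableSet (cyl x n) := by
  rw [← preimage_singleton_proj]
  exact measurable_proj n (measurableSet_singleton _)

lemma pi_le_iSup_Fcan : (MeasurableSpace.pi : MeasurableSpace (ℕ → Bool)) ≤ ⨆ n, Fcan n := by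
  have hdef : (MeasurableSpace.pi : MeasurableSpace (ℕ → Bool)) =
      ⨆ i : ℕ, MeasurableSpace.comap (fun y : ℕ → Bool => y i) inferInstance := rfl
  rw [hdef]
  refine iSup_le fun i => ?_
  have hm : Measurable[Fcan (i + 1)] (fun y : ℕ → Bool => y i) := by
    have heq : (fun y : ℕ → Bool => y i)
        = (fun v : Fin (i + 1) → Bool => v ⟨i, Nat.lt_succ_self i⟩) ∘ proj (i + 1) := rfl
    rw [heq]
    exact (measurable_pi_apply _).comp (measurable_Fcan_proj (i + 1))
  exact le_trans hm.comap_le (le_iSup Fcan (i + 1))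

lemma meas_cyl {μ : Measure (ℕ → Bool)} (hμ : IsFairCoin μ) (x : ℕ → Bool) (n : ℕ) :
    μ (cyl x n) = (1 / 2) ^ n := by
  have hcyl : cyl x n = ⋂ i ∈ Finset.range n, {y : ℕ → Bool | y i = x i} := by
    ext y; simp [cyl]
  rw [hcyl, hμ.2.1.meas_biInter (S := Finset.range n)
    (fun i _ => ⟨{x i}, measurableSet_singleton _, by ext y; simp⟩)]
  simp [hμ.2.2]


noncomputable def dens (μ : Measure (ℕ → Bool)) (A : Set (ℕ → Bool)) (n : ℕ) (x : ℕ → Bool) : ℝ :=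
  (μ (A ∩ cyl x n)).toReal * 2 ^ n

lemma cyl_eq_of_mem {x y : ℕ → Bool} {n : ℕ} (h : y ∈ cyl x n) : cyl y n = cyl x n := by
  rw [← preimage_singleton_proj y n, ← preimage_singleton_proj x n]
  have hp : proj n y = proj n x := funext fun i => h i i.2
  rw [hp]

lemma dens_comp (μ : Measure (ℕ → Bool)) (A : Set (ℕ → Bool)) (n : ℕ) :
    dens μ A n = (fun v : Fin n → Bool => (μ (A ∩ proj n ⁻¹' {v})).toReal * 2 ^ n) ∘ proj n := by
  funext x
  simp only [Function.comp_apply, dens, preimage_singleton_proj]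

lemma measurable_dens (μ : Measure (ℕ → Bool)) (A : Set (ℕ → Bool)) (n : ℕ) :
    Measurable[Fcan n] (dens μ A n) := by
  rw [dens_comp]
  exact (measurable_of_countable _).comp (measurable_Fcan_proj n)

lemma integrable_dens {μ : Measure (ℕ → Bool)} (hμ : IsFairCoin μ) (A : Set (ℕ → Bool)) (n : ℕ) :
    Integrable (dens μ A n) μ := by
  haveI := hμ.1
  refine (integrable_const ((2 : ℝ) ^ n)).mono'
    (((measurable_dens μ A n).mono (Fcan_le n) le_rfl)).aestronglyMeasurable
    (ae_of_all _ fun x => ?_)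
  simp only [dens, Real.norm_eq_abs]
  rw [abs_of_nonneg (mul_nonneg ENNReal.toReal_nonneg (by positivity))]
  have h1 : (μ (A ∩ cyl x n)).toReal ≤ 1 := by
    have h := prob_le_one (μ := μ) (s := A ∩ cyl x n)
    simpa using ENNReal.toReal_mono ENNReal.one_ne_top h
  have := mul_le_mul_of_nonneg_right h1 (by positivity : (0:ℝ) ≤ 2 ^ n)
  simpa using this

lemma setIntegral_dens_cyl {μ : Measure (ℕ → Bool)} (hμ : IsFairCoin μ) (A : Set (ℕ → Bool))
    (z : ℕ → Bool) (n : ℕ) :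
    ∫ x in cyl z n, dens μ A n x ∂μ = (μ (A ∩ cyl z n)).toReal := by
  haveI := hμ.1
  have hconst : Set.EqOn (dens μ A n) (fun _ => (μ (A ∩ cyl z n)).toReal * 2 ^ n) (cyl z n) :=
    fun x hx => by simp [dens, cyl_eq_of_mem hx]
  rw [setIntegral_congr_fun (measurableSet_cyl z n) hconst, setIntegral_const, measureReal_def, meas_cyl hμ,
    smul_eq_mul]
  have h2 : (((1 : ℝ≥0∞) / 2) ^ n).toReal = (1 / 2 : ℝ) ^ n := by simp
  rw [h2, mul_comm, mul_assoc, ← mul_pow]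
  norm_num

lemma setIntegral_dens {μ : Measure (ℕ → Bool)} (hμ : IsFairCoin μ) (A : Set (ℕ → Bool))
    (hA : MeasurableSet A) {n : ℕ} {s : Set (ℕ → Bool)} (hs : MeasurableSet[Fcan n] s) :
    ∫ x in s, dens μ A n x ∂μ = (μ (A ∩ s)).toReal := by
  haveI := hμ.1
  obtain ⟨t, -, rfl⟩ := hs
  classical
  set T := t.toFinite.toFinset with hT
  have hsU : proj n ⁻¹' t = ⋃ v ∈ T, proj n ⁻¹' {v} := by
    ext y
    simp only [Set.mem_preimage, Set.mem_iUnion, Set.mem_singleton_iff,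
      Set.Finite.mem_toFinset, hT]
    constructor
    · intro h; exact ⟨proj n y, h, rfl⟩
    · rintro ⟨v, hv, h⟩; exact h ▸ hv
  have hatom : ∀ v : Fin n → Bool, MeasurableSet (proj n ⁻¹' {v}) :=
    fun v => measurable_proj n (measurableSet_singleton _)
  have hdisj : (T : Set (Fin n → Bool)).Pairwise (Function.onFun Disjoint fun v => proj n ⁻¹' {v}) :=
    fun a _ b _ hab => Disjoint.preimage _ (by simp [hab])
  rw [hsU, integral_biUnion_finset T (fun v _ => hatom v) hdisj
    (fun v _ => (integrable_dens hμ A n).integrableOn)]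
  have hAtomInt : ∀ v ∈ T, ∫ x in proj n ⁻¹' {v}, dens μ A n x ∂μ
      = (μ (A ∩ proj n ⁻¹' {v})).toReal := fun v _ => by
    rw [preimage_singleton_eq_cyl]; exact setIntegral_dens_cyl hμ A _ n
  rw [Finset.sum_congr rfl hAtomInt]
  have hAU : A ∩ ⋃ v ∈ T, proj n ⁻¹' {v} = ⋃ v ∈ T, A ∩ proj n ⁻¹' {v} := by
    rw [Set.inter_iUnion₂]
  rw [hAU, measure_biUnion_finset
    (fun a ha b hb hab => ((hdisj ha hb hab).mono Set.inter_subset_right Set.inter_subset_right))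
    (fun v _ => hA.inter (hatom v)),
    ENNReal.toReal_sum (fun v _ => measure_ne_top μ _)]

lemma dens_ae_eq_condexp {μ : Measure (ℕ → Bool)} (hμ : IsFairCoin μ) {A : Set (ℕ → Bool)}
    (hA : MeasurableSet A) (n : ℕ) :
    dens μ A n =ᵐ[μ] μ[A.indicator (fun _ => (1 : ℝ)) | Fcan n] := by
  haveI := hμ.1
  refine ae_eq_condExp_of_forall_setIntegral_eq (Fcan_le n)
    ((integrable_const (1 : ℝ)).indicator hA)
    (fun s _ _ => (integrable_dens hμ A n).integrableOn)
    (fun s hs _ => ?_)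
    (((measurable_dens μ A n).stronglyMeasurable).aestronglyMeasurable)
  rw [setIntegral_dens hμ A hA hs, setIntegral_indicator hA, setIntegral_const, smul_eq_mul,
    mul_one, measureReal_def, Set.inter_comm]

/-- Lebesgue density theorem on Cantor space: for every measurable `A`, for μ-almost
every `x ∈ A` the cylinder densities of `A` at `x` converge to `1`. -/
theorem lebesgue_density_cantor (μ : Measure (ℕ → Bool)) (hμ : IsFairCoin μ)
    (A : Set (ℕ → Bool)) (hA : MeasurableSet A) :
    ∀ᵐ x ∂μ, x ∈ A →
      Filter.Tendsto (fun n => μ (A ∩ cyl x n) / μ (cyl x n)) Filter.atTop (nhds 1) := by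
  haveI := hμ.1
  set f : (ℕ → Bool) → ℝ := A.indicator fun _ => 1 with hf
  set ℱ : Filtration ℕ (MeasurableSpace.pi : MeasurableSpace (ℕ → Bool)) :=
    ⟨Fcan, Fcan_mono, Fcan_le⟩ with hℱ
  have hfmeas : StronglyMeasurable[⨆ n, Fcan n] f :=
    StronglyMeasurable.indicator stronglyMeasurable_const (pi_le_iSup_Fcan A hA)
  have hint : Integrable f μ := (integrable_const 1).indicator hA
  have hmc : ∀ᵐ x ∂μ, Tendsto (fun n => (μ[f | ℱ n]) x) atTop (𝓝 (f x)) :=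
    hint.tendsto_ae_condExp hfmeas
  have hae : ∀ᵐ x ∂μ, ∀ n, dens μ A n x = (μ[f | ℱ n]) x :=
    ae_all_iff.mpr fun n => dens_ae_eq_condexp hμ hA n
  filter_upwards [hmc, hae] with x hx hdx hxA
  have hfx : f x = 1 := Set.indicator_of_mem hxA _
  have h1 : Tendsto (fun n => dens μ A n x) atTop (𝓝 1) := by
    rw [← hfx]
    exact hx.congr fun n => (hdx n).symm
  have hne : ∀ n, μ (A ∩ cyl x n) / μ (cyl x n) ≠ ∞ := fun n =>
    (ENNReal.div_lt_top (measure_ne_top μ _) (by rw [meas_cyl hμ]; exact pow_ne_zero n (by norm_num))).ne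
  have htoReal : ∀ n, (μ (A ∩ cyl x n) / μ (cyl x n)).toReal = dens μ A n x := fun n => by
    rw [ENNReal.toReal_div, meas_cyl hμ, dens]
    have h2 : (((1 : ℝ≥0∞) / 2) ^ n).toReal = (1 / 2 : ℝ) ^ n := by simp
    rw [h2, one_div, inv_pow, div_eq_mul_inv, inv_inv]
  refine (ENNReal.tendsto_toReal_iff hne (by simp)).mp ?_
  rw [ENNReal.toReal_one]
  exact h1.congr fun n => (htoReal n).symm

end Stmt3
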